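/- Let f : ℝⁿ → ℝ be twice continuously differentiable with ∇f(0) = 0 and D²f(0) positive definite. Then there exist C > 0 and ε₀ > 0 such that for every 0 < ε ≤ ε₀, the connected component K_ε of the sublevel set {x : f(x) ≤ f(0) + ε} containing 0 is compact, convex, contained in the closed ball of radius C√ε centered at 0, and ∇f(x) ≠ 0 for every x ∈ ∂K_ε. -/

import Mathlib

/-- The Hessian matrix of a function on `ℝⁿ`, with entries the second partial derivatives. -/
noncomputable def hess {n : ℕ} (f : EuclideanSpace ℝ (Fin n) → ℝ)
    (x : EuclideanSpace ℝ (Fin n)) : Matrix (Fin n) (Fin n) ℝ :=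
  Matrix.of fun i j =>
    fderiv ℝ (fun y => fderiv ℝ f y (EuclideanSpace.single j 1)) x (EuclideanSpace.single i 1)

open Metric Set

private lemma line_d1 {n : ℕ} {f : EuclideanSpace ℝ (Fin n) → ℝ} (hf : ContDiff ℝ 2 f)
    (x v : EuclideanSpace ℝ (Fin n)) (t : ℝ) :
    HasDerivAt (fun s : ℝ => f (x + s • v)) (fderiv ℝ f (x + t • v) v) t := by
  have hL : HasDerivAt (fun s : ℝ => x + s • v) v t := by
    simpa using ((hasDerivAt_id t).smul_const v).const_add x
  exact ((hf.differentiable two_ne_zero) (x + t • v)).hasFDerivAt.comp_hasDerivAt t hL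

private lemma line_d2 {n : ℕ} {f : EuclideanSpace ℝ (Fin n) → ℝ} (hf : ContDiff ℝ 2 f)
    (x v : EuclideanSpace ℝ (Fin n)) (t : ℝ) :
    HasDerivAt (fun s : ℝ => fderiv ℝ f (x + s • v) v)
      (fderiv ℝ (fderiv ℝ f) (x + t • v) v v) t := by
  have hL : HasDerivAt (fun s : ℝ => x + s • v) v t := by
    simpa using ((hasDerivAt_id t).smul_const v).const_add x
  have hdf : Differentiable ℝ (fderiv ℝ f) :=
    (hf.fderiv_right (m := 1) (by norm_num)).differentiable one_ne_zero
  have h1 : HasDerivAt (fun s : ℝ => fderiv ℝ f (x + s • v))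
      (fderiv ℝ (fderiv ℝ f) (x + t • v) v) t :=
    (hdf (x + t • v)).hasFDerivAt.comp_hasDerivAt t hL
  simpa using h1.clm_apply (hasDerivAt_const t v)

private lemma hess_apply' {n : ℕ} {f : EuclideanSpace ℝ (Fin n) → ℝ} (hf : ContDiff ℝ 2 f)
    (i j : Fin n) :
    hess f 0 i j = fderiv ℝ (fderiv ℝ f) 0 (EuclideanSpace.single i 1)
      (EuclideanSpace.single j 1) := by
  have hdf : DifferentiableAt ℝ (fderiv ℝ f) 0 :=
    ((hf.fderiv_right (m := 1) (by norm_num)).differentiable one_ne_zero) 0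
  have h := fderiv_clm_apply (𝕜 := ℝ) hdf
    (differentiableAt_const (EuclideanSpace.single (𝕜 := ℝ) j (1:ℝ)))
  simp only [hess, Matrix.of_apply, h]
  simp

private lemma quad_expand' {n : ℕ} {f : EuclideanSpace ℝ (Fin n) → ℝ} (hf : ContDiff ℝ 2 f)
    (v : EuclideanSpace ℝ (Fin n)) :
    fderiv ℝ (fderiv ℝ f) 0 v v =
      dotProduct (fun i => v i) ((hess f 0).mulVec (fun i => v i)) := by
  have hv : v = ∑ i, v i • EuclideanSpace.single i (1:ℝ) := by
    have := (EuclideanSpace.basisFun (Fin n) ℝ).sum_repr v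
    simpa [EuclideanSpace.basisFun_apply, EuclideanSpace.basisFun_repr] using this.symm
  conv_lhs => rw [hv]
  rw [map_sum]
  simp only [map_smul, ContinuousLinearMap.sum_apply, ContinuousLinearMap.coe_smul',
    Pi.smul_apply, smul_eq_mul, dotProduct, Matrix.mulVec, hess_apply' hf,
    Finset.mul_sum]
  have hexp : ∀ i : Fin n, (fderiv ℝ (fderiv ℝ f) 0 (∑ x, v x • EuclideanSpace.single x (1:ℝ)))
      (EuclideanSpace.single i 1) = ∑ x, v x *
        fderiv ℝ (fderiv ℝ f) 0 (EuclideanSpace.single x 1) (EuclideanSpace.single i 1) := by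
    intro i
    rw [map_sum, ContinuousLinearMap.sum_apply]
    refine Finset.sum_congr rfl fun x _ => ?_
    simp
  simp only [hexp, Finset.mul_sum]
  rw [Finset.sum_comm]
  refine Finset.sum_congr rfl fun i _ => Finset.sum_congr rfl fun j _ => ?_
  ring

private lemma exists_m' {n : ℕ} {f : EuclideanSpace ℝ (Fin n) → ℝ} (hf : ContDiff ℝ 2 f)
    (hpos : (hess f 0).PosDef) (hn : 0 < n) :
    ∃ m > (0:ℝ), ∀ v : EuclideanSpace ℝ (Fin n), m * ‖v‖^2 ≤ fderiv ℝ (fderiv ℝ f) 0 v v := by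
  have hQpos : ∀ v : EuclideanSpace ℝ (Fin n), v ≠ 0 → 0 < fderiv ℝ (fderiv ℝ f) 0 v v := by
    intro v hv
    rw [quad_expand' hf]
    have hv' : (fun i => v i) ≠ (0 : Fin n → ℝ) := by
      intro h
      apply hv
      ext i
      exact congrFun h i
    simpa using hpos.dotProduct_mulVec_pos hv'
  haveI : Nontrivial (EuclideanSpace ℝ (Fin n)) :=
    ⟨⟨EuclideanSpace.single ⟨0, hn⟩ 1, 0, by
      intro h
      simpa using congrArg (fun w => w ⟨0, hn⟩) h⟩⟩
  have hcont : Continuous fun v : EuclideanSpace ℝ (Fin n) => fderiv ℝ (fderiv ℝ f) 0 v v :=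
    (fderiv ℝ (fderiv ℝ f) 0).continuous.clm_apply continuous_id
  obtain ⟨v₀, hv₀s, hv₀min'⟩ := (isCompact_sphere (0 : EuclideanSpace ℝ (Fin n)) 1).exists_isMinOn
    (NormedSpace.sphere_nonempty.mpr zero_le_one) hcont.continuousOn
  have hv₀min := isMinOn_iff.mp hv₀min'
  have hv₀n : ‖v₀‖ = 1 := mem_sphere_zero_iff_norm.mp hv₀s
  have hv₀ : v₀ ≠ 0 := by intro h; rw [h] at hv₀n; simp at hv₀n
  refine ⟨fderiv ℝ (fderiv ℝ f) 0 v₀ v₀, hQpos v₀ hv₀, fun v => ?_⟩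
  rcases eq_or_ne v 0 with rfl | hv
  · simp
  · set c := ‖v‖ with hc
    have hcpos : 0 < c := norm_pos_iff.mpr hv
    set u := c⁻¹ • v with hu
    have hun : u ∈ sphere (0 : EuclideanSpace ℝ (Fin n)) 1 := by
      rw [mem_sphere_zero_iff_norm, hu, norm_smul, Real.norm_eq_abs,
        abs_of_pos (inv_pos.mpr hcpos)]
      field_simp
      exact hc.symm
    have hvc : v = c • u := by
      rw [hu, smul_smul]
      field_simp
      rw [one_smul]
    have hmin := hv₀min u hun
    have hexp : fderiv ℝ (fderiv ℝ f) 0 v v = c * (c * fderiv ℝ (fderiv ℝ f) 0 u u) := by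
      conv_lhs => rw [hvc]
      simp [map_smul]
    rw [hexp]
    nlinarith [hQpos v₀ hv₀]

private lemma exists_r' {n : ℕ} {f : EuclideanSpace ℝ (Fin n) → ℝ} (hf : ContDiff ℝ 2 f)
    {m : ℝ} (hm : 0 < m)
    (hq : ∀ v, m * ‖v‖^2 ≤ fderiv ℝ (fderiv ℝ f) 0 v v) :
    ∃ r > (0:ℝ), ∀ x : EuclideanSpace ℝ (Fin n), ‖x‖ ≤ r →
      ∀ v, m/2 * ‖v‖^2 ≤ fderiv ℝ (fderiv ℝ f) x v v := by
  have hgc : Continuous (fderiv ℝ (fderiv ℝ f)) :=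
    (hf.fderiv_right (m := 1) (by norm_num)).continuous_fderiv one_ne_zero
  obtain ⟨δ, hδ, hδ'⟩ := (Metric.continuousAt_iff (α := EuclideanSpace ℝ (Fin n)) (β := EuclideanSpace ℝ (Fin n) →L[ℝ] EuclideanSpace ℝ (Fin n) →L[ℝ] ℝ)).mp (hgc.continuousAt (x := (0 : EuclideanSpace ℝ (Fin n)))) (m/2) (by linarith)
  refine ⟨δ/2, by linarith, fun x hx v => ?_⟩
  have hd : dist (fderiv ℝ (fderiv ℝ f) x) (fderiv ℝ (fderiv ℝ f) 0) < m/2 := by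
    apply hδ'
    rw [dist_zero_right]
    linarith
  have hb : |(fderiv ℝ (fderiv ℝ f) x - fderiv ℝ (fderiv ℝ f) 0) v v| ≤
      ‖fderiv ℝ (fderiv ℝ f) x - fderiv ℝ (fderiv ℝ f) 0‖ * ‖v‖ * ‖v‖ := by
    rw [← Real.norm_eq_abs]
    exact ((fderiv ℝ (fderiv ℝ f) x - fderiv ℝ (fderiv ℝ f) 0).le_opNorm₂ v v)
  rw [dist_eq_norm (E := EuclideanSpace ℝ (Fin n) →L[ℝ] EuclideanSpace ℝ (Fin n) →L[ℝ] ℝ)] at hd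
  have hsub : (fderiv ℝ (fderiv ℝ f) x - fderiv ℝ (fderiv ℝ f) 0) v v =
      fderiv ℝ (fderiv ℝ f) x v v - fderiv ℝ (fderiv ℝ f) 0 v v := by simp
  have h1 := hq v
  have h2 := abs_le.mp hb
  nlinarith [sq_nonneg ‖v‖, norm_nonneg v, sq_abs ‖v‖]

private lemma key_bounds' {n : ℕ} {f : EuclideanSpace ℝ (Fin n) → ℝ} (hf : ContDiff ℝ 2 f)
    (hgrad0 : fderiv ℝ f 0 = 0) {m r : ℝ}
    (hr : ∀ x : EuclideanSpace ℝ (Fin n), ‖x‖ ≤ r →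
      ∀ v, m/2 * ‖v‖^2 ≤ fderiv ℝ (fderiv ℝ f) x v v)
    (x : EuclideanSpace ℝ (Fin n)) (hx : ‖x‖ ≤ r) :
    f 0 + m/4 * ‖x‖^2 ≤ f x ∧ m/2 * ‖x‖^2 ≤ fderiv ℝ f x x := by
  have hseg : ∀ t : ℝ, t ∈ Icc (0:ℝ) 1 → ‖(0:EuclideanSpace ℝ (Fin n)) + t • x‖ ≤ r := by
    intro t ht
    rw [zero_add, norm_smul, Real.norm_eq_abs, abs_of_nonneg ht.1]
    nlinarith [norm_nonneg x, ht.2]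
  set χ : ℝ → ℝ := fun t => fderiv ℝ f ((0:EuclideanSpace ℝ (Fin n)) + t • x) x
    - m/2 * ‖x‖^2 * t with hχdef
  have hχ : ∀ t : ℝ, HasDerivAt χ
      (fderiv ℝ (fderiv ℝ f) ((0:EuclideanSpace ℝ (Fin n)) + t • x) x x - m/2 * ‖x‖^2) t := by
    intro t
    have h2 := line_d2 hf 0 x t
    have h3 : HasDerivAt (fun t : ℝ => m/2 * ‖x‖^2 * t) (m/2 * ‖x‖^2) t := by
      simpa using (hasDerivAt_id t).const_mul (m/2 * ‖x‖^2)
    exact h2.sub h3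
  have hχmono : MonotoneOn χ (Icc (0:ℝ) 1) := by
    apply monotoneOn_of_deriv_nonneg (convex_Icc 0 1)
    · exact (continuous_iff_continuousAt.mpr fun t => (hχ t).continuousAt).continuousOn
    · exact fun t _ => (hχ t).differentiableAt.differentiableWithinAt
    · intro t ht
      rw [interior_Icc] at ht
      rw [(hχ t).deriv]
      have := hr _ (hseg t ⟨ht.1.le, ht.2.le⟩) x
      linarith
  have hχ0 : χ 0 = 0 := by
    simp [hχdef, hgrad0]
  have hstep1 : ∀ t : ℝ, t ∈ Icc (0:ℝ) 1 →
      m/2 * ‖x‖^2 * t ≤ fderiv ℝ f ((0:EuclideanSpace ℝ (Fin n)) + t • x) x := by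
    intro t ht
    have := hχmono (left_mem_Icc.mpr zero_le_one) ht ht.1
    rw [hχ0] at this
    simp only [hχdef] at this
    linarith
  constructor
  · set ψ : ℝ → ℝ := fun t => f ((0:EuclideanSpace ℝ (Fin n)) + t • x)
      - m/4 * ‖x‖^2 * t^2 with hψdef
    have hψ : ∀ t : ℝ, HasDerivAt ψ
        (fderiv ℝ f ((0:EuclideanSpace ℝ (Fin n)) + t • x) x - m/2 * ‖x‖^2 * t) t := by
      intro t
      have h1 := line_d1 hf 0 x t
      have h2 : HasDerivAt (fun t : ℝ => m/4 * ‖x‖^2 * t^2) (m/2 * ‖x‖^2 * t) t := by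
        have := (hasDerivAt_pow 2 t).const_mul (m/4 * ‖x‖^2)
        refine this.congr_deriv ?_
        ring_nf
      exact h1.sub h2
    have hψmono : MonotoneOn ψ (Icc (0:ℝ) 1) := by
      apply monotoneOn_of_deriv_nonneg (convex_Icc 0 1)
      · exact (continuous_iff_continuousAt.mpr fun t => (hψ t).continuousAt).continuousOn
      · exact fun t _ => (hψ t).differentiableAt.differentiableWithinAt
      · intro t ht
        rw [interior_Icc] at ht
        rw [(hψ t).deriv]
        have := hstep1 t ⟨ht.1.le, ht.2.le⟩
        linarith
    have := hψmono (left_mem_Icc.mpr zero_le_one) (right_mem_Icc.mpr zero_le_one) zero_le_one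
    simp only [hψdef] at this
    simp only [zero_smul, add_zero, one_smul, zero_add] at this
    norm_num at this
    linarith
  · have := hstep1 1 (right_mem_Icc.mpr zero_le_one)
    simp only [one_smul, zero_add] at this
    linarith

private lemma conv_on' {n : ℕ} {f : EuclideanSpace ℝ (Fin n) → ℝ} (hf : ContDiff ℝ 2 f)
    {m r : ℝ} (hm : 0 < m)
    (hr : ∀ x : EuclideanSpace ℝ (Fin n), ‖x‖ ≤ r →
      ∀ v, m/2 * ‖v‖^2 ≤ fderiv ℝ (fderiv ℝ f) x v v) :
    ConvexOn ℝ (closedBall (0:EuclideanSpace ℝ (Fin n)) r) f := by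
  refine ⟨convex_closedBall _ _, fun x hx y hy a b ha hb hab => ?_⟩
  rw [mem_closedBall_zero_iff] at hx hy
  set v := y - x with hv
  set φ : ℝ → ℝ := fun s => f (x + s • v) with hφdef
  have hφ1 : ∀ t : ℝ, HasDerivAt φ (fderiv ℝ f (x + t • v) v) t := line_d1 hf x v
  have hseg : ∀ t ∈ Icc (0:ℝ) 1, ‖x + t • v‖ ≤ r := by
    intro t ht
    have hrw : x + t • v = (1-t) • x + t • y := by
      rw [hv, smul_sub, sub_smul, one_smul]
      abel
    rw [hrw]
    calc ‖(1-t) • x + t • y‖ ≤ ‖(1-t) • x‖ + ‖t • y‖ := norm_add_le _ _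
      _ = (1-t) * ‖x‖ + t * ‖y‖ := by
          rw [norm_smul, norm_smul, Real.norm_eq_abs, Real.norm_eq_abs,
            abs_of_nonneg (by linarith [ht.2] : (0:ℝ) ≤ 1 - t), abs_of_nonneg ht.1]
      _ ≤ (1-t) * r + t * r := by
          have h1 : (0:ℝ) ≤ 1 - t := by linarith [ht.2]
          nlinarith [ht.1]
      _ = r := by ring
  have hderiv : deriv φ = fun t => fderiv ℝ f (x + t • v) v := funext fun t => (hφ1 t).deriv
  have hcv : ConvexOn ℝ (Icc (0:ℝ) 1) φ := by
    apply convexOn_of_deriv2_nonneg (convex_Icc 0 1)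
    · exact (continuous_iff_continuousAt.mpr fun t => (hφ1 t).continuousAt).continuousOn
    · exact fun t _ => (hφ1 t).differentiableAt.differentiableWithinAt
    · rw [hderiv]
      exact fun t _ => (line_d2 hf x v t).differentiableAt.differentiableWithinAt
    · intro t ht
      rw [interior_Icc] at ht
      have h2 : deriv^[2] φ t = deriv (deriv φ) t := rfl
      rw [h2, hderiv, (line_d2 hf x v t).deriv]
      have := hr _ (hseg t ⟨ht.1.le, ht.2.le⟩) v
      nlinarith [sq_nonneg ‖v‖]
  have h01 : (0:ℝ) ∈ Icc (0:ℝ) 1 := left_mem_Icc.mpr zero_le_one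
  have h11 : (1:ℝ) ∈ Icc (0:ℝ) 1 := right_mem_Icc.mpr zero_le_one
  have hineq := hcv.2 h01 h11 ha hb hab
  have ha' : a = 1 - b := by linarith
  have e0 : x + (0:ℝ) • v = x := by simp
  have e1 : x + (1:ℝ) • v = y := by simp [hv]
  simp only [hφdef, smul_eq_mul] at hineq
  rw [show a * 0 + b * 1 = b by ring] at hineq
  calc f (a • x + b • y) = f (x + b • v) := by
        rw [hv, show x + b • (y - x) = a • x + b • y by
          rw [smul_sub, ha', sub_smul, one_smul]; abel]
      _ ≤ a * f (x + (0:ℝ) • v) + b * f (x + (1:ℝ) • v) := hineq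
      _ = a * f x + b * f y := by rw [e0, e1]

/-- If `f` is `C²` with `∇f(0) = 0` and `D²f(0)` positive definite, then there are `C, ε₀ > 0`
such that for `0 < ε ≤ ε₀`, the connected component of `{f ≤ f(0) + ε}` containing `0` is
compact, convex, contained in the closed ball of radius `C√ε`, and the gradient of `f` does not
vanish on its boundary. -/
theorem sublevel_component_of_nondegenerate_min {n : ℕ}
    (f : EuclideanSpace ℝ (Fin n) → ℝ) (hf : ContDiff ℝ 2 f)
    (hgrad : gradient f 0 = 0) (hpos : (hess f 0).PosDef) :
    ∃ C > (0 : ℝ), ∃ ε₀ > (0 : ℝ), ∀ ε : ℝ, 0 < ε → ε ≤ ε₀ →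
      IsCompact (connectedComponentIn {x | f x ≤ f 0 + ε} 0) ∧
      Convex ℝ (connectedComponentIn {x | f x ≤ f 0 + ε} 0) ∧
      connectedComponentIn {x | f x ≤ f 0 + ε} 0 ⊆
        Metric.closedBall 0 (C * Real.sqrt ε) ∧
      ∀ x ∈ frontier (connectedComponentIn {x | f x ≤ f 0 + ε} 0), gradient f x ≠ 0 := by
  rcases Nat.eq_zero_or_pos n with hn | hn
  · subst hn
    haveI hss : Subsingleton (EuclideanSpace ℝ (Fin 0)) :=
      ⟨fun a b => by ext i; exact i.elim0⟩
    haveI : Finite (EuclideanSpace ℝ (Fin 0)) := Finite.of_subsingleton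
    refine ⟨1, one_pos, 1, one_pos, fun ε hε _ => ?_⟩
    have hKuniv : connectedComponentIn {x : EuclideanSpace ℝ (Fin 0) | f x ≤ f 0 + ε} 0
        = univ := by
      have hAuniv : {x : EuclideanSpace ℝ (Fin 0) | f x ≤ f 0 + ε} = univ := by
        ext x
        simp only [mem_setOf_eq, mem_univ, iff_true]
        rw [Subsingleton.elim x 0]
        linarith
      rw [hAuniv, connectedComponentIn_univ]
      apply eq_univ_of_forall
      intro x
      rw [Subsingleton.elim x (0 : EuclideanSpace ℝ (Fin 0))]
      exact mem_connectedComponent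
    rw [hKuniv]
    refine ⟨finite_univ.isCompact, convex_univ, ?_, ?_⟩
    · intro x _
      rw [Subsingleton.elim x (0 : EuclideanSpace ℝ (Fin 0))]
      simp only [mem_closedBall, dist_self]
      positivity
    · rw [frontier_univ]
      simp
  · have hfd : Differentiable ℝ f := hf.differentiable two_ne_zero
    have hgrad0 : fderiv ℝ f 0 = 0 := by
      have h : gradient f 0 = (InnerProductSpace.toDual ℝ _).symm (fderiv ℝ f 0) := rfl
      rw [h] at hgrad
      exact (LinearIsometryEquiv.map_eq_zero_iff _).mp hgrad
    obtain ⟨m, hm, hmq⟩ := exists_m' hf hpos hn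
    obtain ⟨r, hrpos, hrq⟩ := exists_r' hf hm hmq
    have hconv := conv_on' hf hm hrq
    have hkey := fun x hx => key_bounds' hf hgrad0 hrq x hx
    set C : ℝ := 2 / Real.sqrt m with hC
    have hsm : 0 < Real.sqrt m := Real.sqrt_pos.mpr hm
    have hCpos : 0 < C := by positivity
    refine ⟨C, hCpos, (r/(4*C))^2, by positivity, fun ε hε hεle => ?_⟩
    set A := {x : EuclideanSpace ℝ (Fin n) | f x ≤ f 0 + ε} with hA
    set K := connectedComponentIn A 0 with hK
    have h0A : (0 : EuclideanSpace ℝ (Fin n)) ∈ A := by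
      simp only [hA, mem_setOf_eq]
      linarith
    have h0K : (0 : EuclideanSpace ℝ (Fin n)) ∈ K := mem_connectedComponentIn h0A
    have hCe : C * Real.sqrt ε ≤ r/4 := by
      have h1 : Real.sqrt ε ≤ r/(4*C) := by
        have := Real.sqrt_le_sqrt hεle
        rwa [Real.sqrt_sq (by positivity : (0:ℝ) ≤ r/(4*C))] at this
      calc C * Real.sqrt ε ≤ C * (r/(4*C)) := by nlinarith
        _ = r/4 := by field_simp
    have hballbound : ∀ x : EuclideanSpace ℝ (Fin n), ‖x‖ ≤ r → x ∈ A →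
        ‖x‖ ≤ C * Real.sqrt ε := by
      intro x hx hxA
      have h1 := (hkey x hx).1
      have hxA' : f x ≤ f 0 + ε := hxA
      have hC2 : C^2 = 4/m := by
        rw [hC, div_pow, Real.sq_sqrt hm.le]
        norm_num
      have h2 : ‖x‖^2 ≤ C^2 * ε := by
        rw [hC2, div_mul_eq_mul_div, le_div_iff₀ hm]
        nlinarith
      calc ‖x‖ = Real.sqrt (‖x‖^2) := (Real.sqrt_sq (norm_nonneg x)).symm
        _ ≤ Real.sqrt (C^2 * ε) := Real.sqrt_le_sqrt h2
        _ = C * Real.sqrt ε := by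
            rw [Real.sqrt_mul (by positivity) ε, Real.sqrt_sq hCpos.le]
    have hKball : K ⊆ ball (0 : EuclideanSpace ℝ (Fin n)) (r/2) := by
      have hdisj : Disjoint (ball (0:EuclideanSpace ℝ (Fin n)) (r/2))
          (closedBall (0:EuclideanSpace ℝ (Fin n)) (r/2))ᶜ :=
        Set.disjoint_left.mpr fun z hz hzc => hzc (ball_subset_closedBall hz)
      have hcover : K ⊆ ball (0:EuclideanSpace ℝ (Fin n)) (r/2) ∪
          (closedBall (0:EuclideanSpace ℝ (Fin n)) (r/2))ᶜ := by
        intro z hzK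
        rcases le_or_gt ‖z‖ (r/2) with hz | hz
        · left
          have hzA : z ∈ A := connectedComponentIn_subset A 0 hzK
          have hzr : ‖z‖ ≤ r := by linarith
          have := hballbound z hzr hzA
          rw [mem_ball, dist_zero_right]
          linarith
        · right
          simp only [mem_compl_iff, mem_closedBall, dist_zero_right, not_le]
          exact hz
      have hne : (K ∩ ball (0:EuclideanSpace ℝ (Fin n)) (r/2)).Nonempty :=
        ⟨0, h0K, mem_ball_self (by linarith)⟩
      exact isPreconnected_connectedComponentIn.subset_left_of_subset_union isOpen_ball
        Metric.isClosed_closedBall.isOpen_compl hdisj hcover hne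
    have hKr : ∀ z ∈ K, ‖z‖ ≤ r := by
      intro z hz
      have := hKball hz
      rw [mem_ball, dist_zero_right] at this
      linarith
    have hKsub : K ⊆ closedBall 0 (C * Real.sqrt ε) := by
      intro z hz
      rw [mem_closedBall, dist_zero_right]
      exact hballbound z (hKr z hz) (connectedComponentIn_subset A 0 hz)
    set S := {x : EuclideanSpace ℝ (Fin n) | x ∈ closedBall (0:EuclideanSpace ℝ (Fin n)) r
      ∧ f x ≤ f 0 + ε} with hS
    have hSconv : Convex ℝ S := hconv.convex_le (f 0 + ε)
    have h0S : (0 : EuclideanSpace ℝ (Fin n)) ∈ S := by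
      refine ⟨by simp [hrpos.le], by linarith⟩
    have hSK : S ⊆ K :=
      hSconv.isPreconnected.subset_connectedComponentIn h0S (fun z hz => hz.2)
    have hKS : K ⊆ S := by
      intro z hz
      exact ⟨by rw [mem_closedBall, dist_zero_right]; exact hKr z hz,
        connectedComponentIn_subset A 0 hz⟩
    have hKeqS : K = S := hKS.antisymm hSK
    have hSclosed : IsClosed S := by
      have : S = closedBall (0:EuclideanSpace ℝ (Fin n)) r ∩ f ⁻¹' (Iic (f 0 + ε)) := rfl
      rw [this]
      exact Metric.isClosed_closedBall.inter (isClosed_Iic.preimage hfd.continuous)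
    refine ⟨?_, ?_, hKsub, ?_⟩
    · rw [hKeqS]
      exact (isCompact_closedBall (0:EuclideanSpace ℝ (Fin n)) r).of_isClosed_subset hSclosed
        (fun z hz => hz.1)
    · rw [hKeqS]
      exact hSconv
    · intro x hxfr hgradx
      have hKclosed : IsClosed K := hKeqS ▸ hSclosed
      obtain ⟨δ, hδpos, hδ⟩ : ∃ δ > 0, ball (0:EuclideanSpace ℝ (Fin n)) δ ⊆ A := by
        obtain ⟨δ, hδpos, hδ'⟩ := Metric.continuousAt_iff.mp hfd.continuous.continuousAt ε hε
        refine ⟨δ, hδpos, fun z hz => ?_⟩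
        have hzd : dist z 0 < δ := mem_ball.mp hz
        have := hδ' hzd
        rw [Real.dist_eq] at this
        have h2 := (abs_lt.mp this).2
        simp only [hA, mem_setOf_eq]
        linarith
      have hballK : ball (0:EuclideanSpace ℝ (Fin n)) δ ⊆ K :=
        (convex_ball (0:EuclideanSpace ℝ (Fin n)) δ).isPreconnected.subset_connectedComponentIn
          (mem_ball_self hδpos) hδ
      have h0int : (0:EuclideanSpace ℝ (Fin n)) ∈ interior K :=
        mem_interior.mpr ⟨ball 0 δ, hballK, isOpen_ball, mem_ball_self hδpos⟩
      rw [hKclosed.frontier_eq] at hxfr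
      have hxK : x ∈ K := hxfr.1
      have hxint : x ∉ interior K := hxfr.2
      have hxne : x ≠ 0 := fun h => hxint (h ▸ h0int)
      have hxr : ‖x‖ ≤ r := hKr x hxK
      have h2 := (hkey x hxr).2
      have hfx0 : fderiv ℝ f x = 0 := by
        have h : gradient f x = (InnerProductSpace.toDual ℝ _).symm (fderiv ℝ f x) := rfl
        rw [h] at hgradx
        exact (LinearIsometryEquiv.map_eq_zero_iff _).mp hgradx
      rw [hfx0] at h2
      simp only [ContinuousLinearMap.zero_apply] at h2
      have hxnorm : 0 < ‖x‖ := norm_pos_iff.mpr hxne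
      have hsq : 0 < ‖x‖^2 := by positivity
      have : (0:ℝ) < m/2 * ‖x‖^2 := by positivity
      linarith
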